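/- Let X be a nonnegative real random variable with E[X] < ∞, and let Y be a random variable taking values in ℕ ∪ {0} whose conditional distribution given X = x is Poisson with mean x, i.e., P_{Y|X}(y|x) = x^y e^{−x} / y!. Then for every y ∈ ℕ ∪ {0} with P_Y(y) > 0, E[X | Y = y] = (y+1) P_Y(y+1) / P_Y(y), where P_Y(y) = E[P_{Y|X}(y|X)] is the marginal probability mass function of Y. -/
import Mathlib

open MeasureTheory Real
open scoped NNReal ENNReal

lemma poisson_pmf_le_one {x : ℝ} (hx : 0 ≤ x) (n : ℕ) :
    x ^ n * Real.exp (-x) / (Nat.factorial n) ≤ 1 := by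
  have h := Real.pow_div_factorial_le_exp x hx n
  have h2 : x ^ n * Real.exp (-x) / (Nat.factorial n)
      = (x ^ n / Nat.factorial n) * Real.exp (-x) := by ring
  rw [h2]
  calc (x ^ n / Nat.factorial n) * Real.exp (-x)
      ≤ Real.exp x * Real.exp (-x) :=
        mul_le_mul_of_nonneg_right h (Real.exp_pos _).le
    _ = 1 := by rw [← Real.exp_add]; simp

theorem tweedie_poisson
    {α : Type*} [MeasurableSpace α] (μ : Measure α) [IsProbabilityMeasure μ]
    (X : α → ℝ) (hX : Measurable X) (hXnn : ∀ ω, 0 ≤ X ω)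
    (hXint : Integrable X μ)
    (Y : α → ℕ) (hY : Measurable Y)
    -- the conditional pmf of Y given X = x is Poisson with mean x
    (hcond : ∀ (y : ℕ) (s : Set ℝ), MeasurableSet s →
      μ (Y ⁻¹' {y} ∩ X ⁻¹' s)
        = ENNReal.ofReal
            (∫ ω in X ⁻¹' s, (X ω) ^ y * Real.exp (-X ω) / (Nat.factorial y) ∂μ)) :
    ∀ y : ℕ, 0 < (μ (Y ⁻¹' {y})).toReal →
      (∫ ω in Y ⁻¹' {y}, X ω ∂μ) / (μ (Y ⁻¹' {y})).toReal
        = ((y : ℝ) + 1) * (μ (Y ⁻¹' {y + 1})).toReal / (μ (Y ⁻¹' {y})).toReal := by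
  intro y hy
  set f : ℝ → ℝ := fun x => x ^ y * Real.exp (-x) / (Nat.factorial y) with hfdef
  have hfmeas : Measurable f := by fun_prop
  have hfnn : ∀ x, 0 ≤ x → 0 ≤ f x := fun x hx => by positivity
  have hfXnn : ∀ ω, 0 ≤ f (X ω) := fun ω => hfnn _ (hXnn ω)
  -- integrability of f ∘ X (bounded by 1)
  have hfXint : Integrable (fun ω => f (X ω)) μ := by
    refine Integrable.mono' (integrable_const 1) (hfmeas.comp hX).aestronglyMeasurable ?_
    filter_upwards with ω
    rw [Real.norm_of_nonneg (hfXnn ω)]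
    exact poisson_pmf_le_one (hXnn ω) y
  -- the two measures on ℝ agree
  have hmap : (μ.restrict (Y ⁻¹' {y})).map X
      = (μ.withDensity (fun ω => ENNReal.ofReal (f (X ω)))).map X := by
    ext s hs
    rw [Measure.map_apply hX hs, Measure.map_apply hX hs,
      Measure.restrict_apply (hX hs), Set.inter_comm, hcond y s hs,
      withDensity_apply _ (hX hs),
      ← ofReal_integral_eq_lintegral_ofReal (hfXint.restrict)
        (Filter.Eventually.of_forall hfXnn)]
  -- rewrite the numerator integral
  have hnum : (∫ ω in Y ⁻¹' {y}, X ω ∂μ) = ∫ ω, f (X ω) * X ω ∂μ := by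
    have h1 : (∫ ω in Y ⁻¹' {y}, X ω ∂μ)
        = ∫ x, x ∂((μ.restrict (Y ⁻¹' {y})).map X) :=
      (integral_map hX.aemeasurable measurable_id.aestronglyMeasurable).symm
    have h2 : ∫ x, x ∂((μ.withDensity (fun ω => ENNReal.ofReal (f (X ω)))).map X)
        = ∫ ω, X ω ∂(μ.withDensity (fun ω => ENNReal.ofReal (f (X ω)))) :=
      integral_map hX.aemeasurable measurable_id.aestronglyMeasurable
    rw [h1, hmap, h2]
    have h3 : (fun ω => ENNReal.ofReal (f (X ω)))
        = fun ω => ((Real.toNNReal (f (X ω)) : ℝ≥0) : ℝ≥0∞) := rfl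
    rw [h3, integral_withDensity_eq_integral_smul
      (by exact (hfmeas.comp hX).real_toNNReal)]
    refine integral_congr_ae (Filter.Eventually.of_forall fun ω => ?_)
    simp [NNReal.smul_def, Real.coe_toNNReal _ (hfXnn ω)]
  -- identify μ (Y = y+1) with an integral
  have hmarg : (μ (Y ⁻¹' {y + 1})).toReal
      = ∫ ω, (X ω) ^ (y + 1) * Real.exp (-X ω) / (Nat.factorial (y + 1)) ∂μ := by
    have h := hcond (y + 1) Set.univ MeasurableSet.univ
    simp only [Set.preimage_univ, Set.inter_univ, Measure.restrict_univ] at h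
    rw [h, ENNReal.toReal_ofReal]
    exact integral_nonneg fun ω => by have := hXnn ω; positivity
  -- combine
  have key : (∫ ω in Y ⁻¹' {y}, X ω ∂μ) = ((y : ℝ) + 1) * (μ (Y ⁻¹' {y + 1})).toReal := by
    rw [hnum, hmarg, ← integral_const_mul]
    refine integral_congr_ae (Filter.Eventually.of_forall fun ω => ?_)
    have hfacpos : (0:ℝ) < (Nat.factorial y : ℝ) := by positivity
    have hfac : ((Nat.factorial (y + 1) : ℝ)) = ((y:ℝ) + 1) * (Nat.factorial y : ℝ) := by
      rw [Nat.factorial_succ]; push_cast; ring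
    simp only [hfdef]
    rw [hfac]
    have hy1 : (0:ℝ) < (y:ℝ) + 1 := by positivity
    field_simp
    ring
  rw [key]
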